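/- Let K ≥ 1, let σ² > 0, and let s_1, …, s_K satisfy 0 < s_k < σ² for every k. Define m by 1/m = Σ_{k=1}^K 1/s_k − (K−1)/σ², and let d satisfy m < d < σ² together with 1/d ≥ 1/m + K/σ² − K·min_{k} (1/s_k). Then λ := K·(1/m − 1/d)^{−1} is positive and satisfies 1/λ ≤ 1/s_k − 1/σ² for every k (so that min{1/λ, 1/s_k − 1/σ²} = 1/λ for every k and Σ_{k=1}^K min{1/λ, 1/s_k − 1/σ²} = 1/m − 1/d), and the numbers d_k defined by 1/d_k = 1/s_k − 1/λ satisfy s_k < d_k ≤ σ² for every k and 1/d = Σ_{k=1}^K 1/d_k − (K−1)/σ². -/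

import Mathlib

/-- "All transmitters active" regime of the waterfilling allocation
for the causal Gaussian CEO problem.  Let `K ≥ 1`, `σ² > 0`, `0 < s k < σ²`, define `m`
by `1/m = ∑ₖ 1/(s k) - (K-1)/σ²`, and let `d` satisfy `m < d < σ²` and
`1/d ≥ 1/m + K/σ² - K · minₖ (1/(s k))`.  Then `λ = K (1/m - 1/d)⁻¹` is positive and
satisfies `1/λ ≤ 1/(s k) - 1/σ²` for every `k` (so the waterfilling minima all equal
`1/λ` and sum to `1/m - 1/d`), and the numbers `d k` defined by
`1/(d k) = 1/(s k) - 1/λ` satisfy `s k < d k ≤ σ²` for every `k` and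
`1/d = ∑ₖ 1/(d k) - (K-1)/σ²`. -/
theorem stmt8 (K : ℕ) (hK : 1 ≤ K) (σ2 : ℝ) (hσ2 : 0 < σ2)
    (s : Fin K → ℝ) (hs : ∀ k, 0 < s k ∧ s k < σ2)
    (m : ℝ) (hm : 1 / m = ∑ k, 1 / s k - ((K : ℝ) - 1) / σ2)
    (d : ℝ) (hmd : m < d) (hdσ : d < σ2)
    (hne : (Finset.univ : Finset (Fin K)).Nonempty)
    (hsmall : 1 / m + (K : ℝ) / σ2
        - (K : ℝ) * Finset.univ.inf' hne (fun k => 1 / s k) ≤ 1 / d)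
    (lam : ℝ) (hlam : lam = (K : ℝ) * (1 / m - 1 / d)⁻¹)
    (dk : Fin K → ℝ) (hdk : ∀ k, 1 / dk k = 1 / s k - 1 / lam) :
    0 < lam ∧
    (∀ k, 1 / lam ≤ 1 / s k - 1 / σ2) ∧
    (∀ k, min (1 / lam) (1 / s k - 1 / σ2) = 1 / lam) ∧
    (∑ k, min (1 / lam) (1 / s k - 1 / σ2) = 1 / m - 1 / d) ∧
    (∀ k, s k < dk k ∧ dk k ≤ σ2) ∧
    1 / d = ∑ k, 1 / dk k - ((K : ℝ) - 1) / σ2 := by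
  have hK0 : (0:ℝ) < K := by exact_mod_cast Nat.lt_of_lt_of_le Nat.zero_lt_one hK
  have hsumgt : (K:ℝ) / σ2 < ∑ k, 1 / s k := by
    have h := Finset.sum_lt_sum_of_nonempty hne
      (fun k _ => one_div_lt_one_div_of_lt (hs k).1 (hs k).2)
    have h2 : ∑ _k : Fin K, (1:ℝ) / σ2 = (K:ℝ) / σ2 := by
      simp [Finset.sum_const, Finset.card_univ]
      ring
    linarith [h, h2.symm ▸ h]
  have h1m : 1 / σ2 < 1 / m := by
    rw [hm]
    have : ((K:ℝ) - 1) / σ2 = (K:ℝ)/σ2 - 1/σ2 := by ring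
    linarith [this]
  have hm0 : 0 < m := by
    have : 0 < 1 / m := lt_trans (by positivity) h1m
    exact (one_div_pos).mp this
  have hd0 : 0 < d := lt_trans hm0 hmd
  have ht : 0 < 1 / m - 1 / d := by
    have := one_div_lt_one_div_of_lt hm0 hmd
    linarith
  have hlam0 : 0 < lam := by
    rw [hlam]; exact mul_pos hK0 (inv_pos.mpr ht)
  have hinvlam : 1 / lam = (1 / m - 1 / d) / K := by
    rw [hlam]
    field_simp
  set I := Finset.univ.inf' hne (fun k => 1 / s k) with hI
  have hIle : ∀ k : Fin K, I ≤ 1 / s k := fun k =>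
    Finset.inf'_le _ (Finset.mem_univ k)
  have hkey : 1 / lam ≤ I - 1 / σ2 := by
    rw [hinvlam, div_le_iff₀ hK0]
    have hKσ : (K:ℝ)/σ2 = (1/σ2) * K := by ring
    nlinarith [hsmall]
  have hle : ∀ k : Fin K, 1 / lam ≤ 1 / s k - 1 / σ2 := fun k =>
    le_trans hkey (by linarith [hIle k])
  have hmin : ∀ k : Fin K, min (1 / lam) (1 / s k - 1 / σ2) = 1 / lam :=
    fun k => min_eq_left (hle k)
  have hsum : ∑ k, min (1 / lam) (1 / s k - 1 / σ2) = 1 / m - 1 / d := by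
    rw [Finset.sum_congr rfl (fun k _ => hmin k)]
    rw [Finset.sum_const, Finset.card_univ, Fintype.card_fin, nsmul_eq_mul, hinvlam]
    field_simp
  have hdkpos : ∀ k : Fin K, 0 < 1 / dk k := by
    intro k
    rw [hdk k]
    have h1 : 0 < 1/σ2 := by positivity
    linarith [hle k]
  have hdk0 : ∀ k : Fin K, 0 < dk k := fun k => (one_div_pos).mp (hdkpos k)
  have hdks : ∀ k : Fin K, s k < dk k ∧ dk k ≤ σ2 := by
    intro k
    constructor
    · have h1 : 1 / dk k < 1 / s k := by
        rw [hdk k]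
        have : 0 < 1 / lam := by positivity
        linarith
      exact lt_of_one_div_lt_one_div (hdk0 k) (by linarith [h1])
    · have h2 : 1 / σ2 ≤ 1 / dk k := by
        rw [hdk k]; linarith [hle k]
      exact le_of_one_div_le_one_div hσ2 h2
  refine ⟨hlam0, hle, hmin, hsum, hdks, ?_⟩
  have hsumdk : ∑ k, 1 / dk k = (∑ k, 1 / s k) - (K:ℝ) * (1 / lam) := by
    rw [Finset.sum_congr rfl (fun k _ => hdk k), Finset.sum_sub_distrib,
      Finset.sum_const, Finset.card_univ, Fintype.card_fin, nsmul_eq_mul]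
  have hKl : (K:ℝ) * (1 / lam) = 1 / m - 1 / d := by
    rw [hinvlam]; field_simp
  rw [hsumdk, hKl]
  linarith [hm]
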